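/- Let p00, p01, p10, p11 be nonnegative reals summing to 1, let p0* = p00 + p01, p1* = p10 + p11, and let q = (√(p11·p00) − √(p01·p10))^2. Then for z* = (p01·p10/(p00·p11))^{1/4} (assuming p00·p11 > 0), the identity (p00·z* + p01/z*)/p0* · (p10/z* + p11·z*)/p1* = 1 − q/(p0*·p1*) holds, assuming p0* > 0 and p1* > 0. -/

import Mathlib

theorem stmt4 (p00 p01 p10 p11 : ℝ)
    (h00 : 0 ≤ p00) (h01 : 0 ≤ p01) (h10 : 0 ≤ p10) (h11 : 0 ≤ p11)
    (hsum : p00 + p01 + p10 + p11 = 1)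
    (hpos : 0 < p00 * p11) (hpos' : 0 < p01 * p10)
    (h0 : 0 < p00 + p01) (h1 : 0 < p10 + p11) :
    (p00 * (p01 * p10 / (p00 * p11)) ^ ((1 : ℝ) / 4) +
        p01 / (p01 * p10 / (p00 * p11)) ^ ((1 : ℝ) / 4)) / (p00 + p01) *
      ((p10 / (p01 * p10 / (p00 * p11)) ^ ((1 : ℝ) / 4) +
        p11 * (p01 * p10 / (p00 * p11)) ^ ((1 : ℝ) / 4)) / (p10 + p11)) =
      1 - (Real.sqrt (p11 * p00) - Real.sqrt (p01 * p10)) ^ 2 /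
        ((p00 + p01) * (p10 + p11)) := by
  have hr : (0:ℝ) < p01 * p10 / (p00 * p11) := div_pos hpos' hpos
  set z : ℝ := (p01 * p10 / (p00 * p11)) ^ ((1 : ℝ) / 4) with hzdef
  have hz : 0 < z := Real.rpow_pos_of_pos hr _
  set s : ℝ := Real.sqrt (p00 * p11 * (p01 * p10)) with hsdef
  have hzz : z * z = Real.sqrt (p01 * p10 / (p00 * p11)) := by
    rw [hzdef, ← Real.rpow_add hr, Real.sqrt_eq_rpow]
    norm_num
  -- key 1 : p00 * p11 * (z*z) = s
  have hk1 : p00 * p11 * (z * z) = s := by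
    rw [hzz, hsdef, ← Real.sqrt_sq hpos.le, ← Real.sqrt_mul (by positivity)]
    congr 1
    rw [Real.sqrt_sq hpos.le]
    field_simp
  -- key 2 : p01 * p10 = s * (z*z)
  have hk2 : p01 * p10 = s * (z * z) := by
    rw [hzz, hsdef, ← Real.sqrt_mul (by positivity), ← Real.sqrt_sq hpos'.le]
    congr 1
    rw [Real.sqrt_sq hpos'.le]
    field_simp [left_ne_zero_of_mul hpos.ne', right_ne_zero_of_mul hpos.ne']
  -- key 3 : sqrt(p11*p00) * sqrt(p01*p10) = s
  have hk3 : Real.sqrt (p11 * p00) * Real.sqrt (p01 * p10) = s := by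
    rw [hsdef, ← Real.sqrt_mul (by positivity)]
    ring_nf
  have ha : Real.sqrt (p11 * p00) ^ 2 = p11 * p00 := Real.sq_sqrt (by positivity)
  have hb : Real.sqrt (p01 * p10) ^ 2 = p01 * p10 := Real.sq_sqrt hpos'.le
  set a : ℝ := Real.sqrt (p11 * p00) with hadef
  set b : ℝ := Real.sqrt (p01 * p10) with hbdef
  field_simp
  linear_combination (1 : ℝ) *
    ((z * z) * hk1 + hk2 + (z * z) * ha + (z * z) * hb - 2 * (z * z) * hk3)
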